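/- arXiv:2406.12565 — 3 statements merged into one kernel-verified Lean document; each statement's English description precedes it below -/
import Mathlib

section
/- The map δ_{0,2} : 𝒲 → 𝓕_0 ⊗ 𝓕_2 given by δ_{0,2}(L_n) = n³ v_0 ⊗ w_n is a 1-cocycle of the Witt algebra, and it is not a 1-coboundary. -/
/-- The action of the Witt basis element `L m` on `𝓕_α ⊗ 𝓕_β`, realized on
`(ℤ × ℤ) →₀ ℂ` with basis `v_i ⊗ w_j ↦ single (i, j) 1`:
`L_m · (v_i ⊗ w_j) = -(i + αm) v_{m+i} ⊗ w_j - (j + βm) v_i ⊗ w_{m+j}`. -/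
noncomputable def tact (α β : ℂ) (m : ℤ) : ((ℤ × ℤ) →₀ ℂ) →ₗ[ℂ] ((ℤ × ℤ) →₀ ℂ) :=
  Finsupp.lsum ℂ fun p => LinearMap.toSpanSingleton ℂ ((ℤ × ℤ) →₀ ℂ)
    ((-((p.1 : ℂ) + α * m)) • Finsupp.single (m + p.1, p.2) (1 : ℂ)
      + (-((p.2 : ℂ) + β * m)) • Finsupp.single (p.1, m + p.2) (1 : ℂ))


lemma tact_single (α β : ℂ) (m : ℤ) (p : ℤ × ℤ) (c : ℂ) :
    tact α β m (Finsupp.single p c) =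
      c • ((-((p.1 : ℂ) + α * m)) • Finsupp.single (m + p.1, p.2) (1 : ℂ)
        + (-((p.2 : ℂ) + β * m)) • Finsupp.single (p.1, m + p.2) (1 : ℂ)) := by
  simp [tact, Finsupp.lsum_single, LinearMap.toSpanSingleton_apply]

lemma key (n : ℤ) (u : (ℤ × ℤ) →₀ ℂ) :
    (tact 0 2 n u) (0, n) = (n : ℂ) * u (-n, n) - 2 * n * u (0, 0) := by
  induction u using Finsupp.induction_linear with
  | zero => simp
  | add f g hf hg =>
      rw [map_add, Finsupp.add_apply, hf, hg, Finsupp.add_apply, Finsupp.add_apply]; ring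
  | single p c =>
      rw [tact_single]
      rcases p with ⟨i, j⟩
      have e1 : (n + i = 0 ∧ j = n) ↔ (i = -n ∧ j = n) := by omega
      have e2 : (i = 0 ∧ n + j = n) ↔ (i = 0 ∧ j = 0) := by omega
      simp only [Finsupp.smul_apply, Finsupp.add_apply, Finsupp.single_apply, Prod.mk.injEq,
        smul_eq_mul, e1, e2]
      by_cases ha : i = -n ∧ j = n <;> by_cases hb : i = 0 ∧ j = 0
      · obtain ⟨rfl, rfl⟩ := ha
        obtain ⟨-, rfl⟩ := hb
        simp
      · obtain ⟨rfl, rfl⟩ := ha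
        simp only [if_neg hb, and_self, if_true, eq_self_iff_true, true_and, and_true]
        push_cast
        ring
      · obtain ⟨rfl, rfl⟩ := hb
        simp only [if_neg ha, and_self, if_true, eq_self_iff_true, true_and, and_true]
        push_cast
        ring
      · rw [if_neg ha, if_neg ha, if_neg hb, if_neg hb]
        ring


/-- A family `d n = d(L_n)` is a 1-cocycle of the Witt algebra with
coefficients in `𝓕_α ⊗ 𝓕_β`: `d([L_m, L_n]) = L_m · d(L_n) - L_n · d(L_m)`. -/
def IsCocycle (α β : ℂ) (d : ℤ → ((ℤ × ℤ) →₀ ℂ)) : Prop :=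
  ∀ m n : ℤ, ((m - n : ℤ) : ℂ) • d (m + n) = tact α β m (d n) - tact α β n (d m)

/-- `d` is a 1-coboundary: `d(L_n) = L_n · u` for a fixed `u` in the module. -/
def IsCoboundary (α β : ℂ) (d : ℤ → ((ℤ × ℤ) →₀ ℂ)) : Prop :=
  ∃ u : (ℤ × ℤ) →₀ ℂ, ∀ n : ℤ, d n = tact α β n u

/-- the map `δ_{0,2}(L_n) = n³ v_0 ⊗ w_n` is a 1-cocycle of the
Witt algebra with coefficients in `𝓕_0 ⊗ 𝓕_2`, and not a 1-coboundary. -/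
theorem d02cube_cocycle_not_coboundary :
    IsCocycle 0 2 (fun n => ((n : ℂ) ^ 3) • Finsupp.single ((0 : ℤ), n) (1 : ℂ)) ∧
    ¬ IsCoboundary 0 2 (fun n => ((n : ℂ) ^ 3) • Finsupp.single ((0 : ℤ), n) (1 : ℂ)) := by
  constructor
  · intro m n
    simp only [IsCocycle]
    rw [map_smul, map_smul, tact_single, tact_single]
    simp only [Int.cast_zero, zero_mul, neg_add_rev, neg_zero, add_zero, zero_add, zero_smul,
      smul_add, smul_smul]
    rw [show n + m = m + n by ring]
    rw [← sub_smul]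
    congr 1
    push_cast
    ring
  · rintro ⟨u, hu⟩
    have hk : ∀ n : ℤ, (n : ℂ) ^ 3 = (n : ℂ) * u (-n, n) - 2 * n * u (0, 0) := by
      intro n
      have h := congrArg (fun f : (ℤ × ℤ) →₀ ℂ => f (0, n)) (hu n)
      simp only [Finsupp.smul_apply, Finsupp.single_eq_same, smul_eq_mul, mul_one] at h
      rw [h, key]
    obtain ⟨N, hN⟩ : ∃ N : ℤ, 1 ≤ N ∧ ∀ p ∈ u.support, p.2 < N := by
      obtain ⟨M, hM⟩ := (u.support.image Prod.snd).bddAbove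
      refine ⟨max 1 (M + 1), le_max_left _ _, fun p hp => ?_⟩
      have := hM (Finset.mem_image_of_mem Prod.snd hp)
      have := le_max_right 1 (M + 1)
      omega
    have hz : ∀ n : ℤ, N ≤ n → u (-n, n) = 0 := by
      intro n hn
      by_contra h
      exact absurd (hN.2 _ (Finsupp.mem_support_iff.mpr h)) (by simp; omega)
    have sq : ∀ n : ℤ, N ≤ n → (n : ℂ) ^ 2 = -2 * u (0, 0) := by
      intro n hn
      have h := hk n
      rw [hz n hn, mul_zero, zero_sub] at h
      have hn0 : (n : ℂ) ≠ 0 := Int.cast_ne_zero.mpr (by omega)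
      have : (n : ℂ) * (n : ℂ) ^ 2 = (n : ℂ) * (-2 * u (0, 0)) := by
        linear_combination h
      exact mul_left_cancel₀ hn0 this
    have h1 := sq N le_rfl
    have h2 := sq (N + 1) (by omega)
    have : ((2 * N + 1 : ℤ) : ℂ) = 0 := by
      push_cast at h2 ⊢
      linear_combination h2 - h1
    have : (2 * N + 1 : ℤ) = 0 := by exact_mod_cast this
    omega
end

section
/- The map δ_{1,1} : 𝒲 → 𝓕_1 ⊗ 𝓕_1 defined by δ_{1,1}(L_n) = Σ_{i=1}^{n} i(n-i) v_i ⊗ w_{n-i} for n ≥ 1, δ_{1,1}(L_0) = 0, and δ_{1,1}(L_n) = -Σ_{i=-1}^{n} i(n-i) v_i ⊗ w_{n-i} for n ≤ -1, is a 1-cocycle of the Witt algebra. -/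
/-- The map `δ_{1,1} : 𝒲 → 𝓕_1 ⊗ 𝓕_1`. -/
noncomputable def d11 (n : ℤ) : (ℤ × ℤ) →₀ ℂ :=
  if 1 ≤ n then
    ∑ i ∈ Finset.Icc (1 : ℤ) n, ((i : ℂ) * ((n : ℂ) - i)) • Finsupp.single (i, n - i) (1 : ℂ)
  else if n = 0 then 0
  else - ∑ i ∈ Finset.Icc n (-1 : ℤ),
    ((i : ℂ) * ((n : ℂ) - i)) • Finsupp.single (i, n - i) (1 : ℂ)

lemma tact_apply (m : ℤ) (x : (ℤ × ℤ) →₀ ℂ) (a b : ℤ) :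
    tact 1 1 m x (a, b) = -(a : ℂ) * x (a - m, b) - (b : ℂ) * x (a, b - m) := by
  induction x using Finsupp.induction_linear with
  | zero => simp
  | add f g hf hg => simp only [map_add, Finsupp.add_apply, hf, hg]; ring
  | single p c =>
    obtain ⟨i, j⟩ := p
    rw [tact, Finsupp.lsum_single]
    have e1 : (m + i = a) = (i = a - m) := propext ⟨fun h => by omega, fun h => by omega⟩
    have e2 : (m + j = b) = (j = b - m) := propext ⟨fun h => by omega, fun h => by omega⟩
    simp only [LinearMap.toSpanSingleton_apply, one_mul, Finsupp.smul_apply,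
      Finsupp.add_apply, Finsupp.single_apply, Prod.mk.injEq, smul_eq_mul, e1, e2]
    split_ifs with h1 h2 h3
    · obtain ⟨rfl, rfl⟩ := h1
      obtain ⟨ha, hb⟩ := h2
      obtain rfl : m = 0 := by omega
      push_cast; ring
    · obtain ⟨rfl, rfl⟩ := h1
      push_cast; ring
    · obtain ⟨rfl, rfl⟩ := h3
      push_cast; ring
    · push_cast; ring

/-- Heaviside step. -/
noncomputable def Hf (i : ℤ) : ℂ := if 1 ≤ i then 1 else 0

lemma d11_apply (n a b : ℤ) :
    d11 n (a, b) = if a + b = n then (a : ℂ) * ((n : ℂ) - a) * (Hf a - Hf (a - n)) else 0 := by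
  rw [d11]
  rcases lt_trichotomy n 0 with hn | rfl | hn
  · rw [if_neg (by omega), if_neg (by omega), Finsupp.neg_apply, Finsupp.finset_sum_apply]
    simp only [Finsupp.smul_apply, Finsupp.single_apply, Prod.mk.injEq, smul_eq_mul,
      mul_ite, mul_one, mul_zero]
    by_cases hab : a + b = n
    · rw [if_pos hab]
      rw [Finset.sum_congr rfl (fun i _ => (by
          rcases eq_or_ne i a with rfl | hi
          · simp [show n - i = b from by omega]
          · simp [hi] : (if i = a ∧ n - i = b then (i : ℂ) * ((n : ℂ) - i) else 0)
              = if i = a then (i : ℂ) * ((n : ℂ) - i) else 0)),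
        Finset.sum_ite_eq' (Finset.Icc n (-1 : ℤ)) a]
      simp only [Finset.mem_Icc, Hf]
      split_ifs <;> try (exfalso; omega)
      all_goals try ring1
      · obtain rfl : a = n := by omega
        ring
      · obtain rfl : a = 0 := by omega
        ring
    · rw [if_neg hab, Finset.sum_eq_zero, neg_zero]
      intro i _
      rw [if_neg (by rintro ⟨rfl, rfl⟩; omega)]
  · rw [if_neg (by omega), if_pos rfl]
    simp only [Finsupp.coe_zero, Pi.zero_apply]
    split_ifs <;> ring_nf
  · rw [if_pos (by omega), Finsupp.finset_sum_apply]
    simp only [Finsupp.smul_apply, Finsupp.single_apply, Prod.mk.injEq, smul_eq_mul,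
      mul_ite, mul_one, mul_zero]
    by_cases hab : a + b = n
    · rw [if_pos hab]
      rw [Finset.sum_congr rfl (fun i _ => (by
          rcases eq_or_ne i a with rfl | hi
          · simp [show n - i = b from by omega]
          · simp [hi] : (if i = a ∧ n - i = b then (i : ℂ) * ((n : ℂ) - i) else 0)
              = if i = a then (i : ℂ) * ((n : ℂ) - i) else 0)),
        Finset.sum_ite_eq' (Finset.Icc (1 : ℤ) n) a]
      simp only [Finset.mem_Icc, Hf]
      split_ifs <;> try (exfalso; omega)
      all_goals ring1
    · rw [if_neg hab, Finset.sum_eq_zero]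
      intro i _
      rw [if_neg (by rintro ⟨rfl, rfl⟩; omega)]

/-- `δ_{1,1}` is a 1-cocycle of the Witt algebra with
coefficients in `𝓕_1 ⊗ 𝓕_1`. -/
theorem d11_isCocycle : IsCocycle 1 1 d11 := by
  intro m n
  ext ⟨a, b⟩
  rw [Finsupp.smul_apply, Finsupp.sub_apply, tact_apply, tact_apply, smul_eq_mul,
      d11_apply, d11_apply, d11_apply, d11_apply, d11_apply]
  by_cases hab : a + b = m + n
  · obtain rfl : b = m + n - a := by omega
    rw [if_pos hab, if_pos (by omega : a - m + (m + n - a) = n),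
        if_pos (by omega : a + (m + n - a - m) = n),
        if_pos (by omega : a - n + (m + n - a) = m),
        if_pos (by omega : a + (m + n - a - n) = m)]
    rw [show a - m - n = a - (m + n) from by ring, show a - n - m = a - (m + n) from by ring]
    push_cast
    generalize Hf a = A
    generalize Hf (a - m) = B
    generalize Hf (a - n) = C
    generalize Hf (a - (m + n)) = D
    ring
  · rw [if_neg hab, if_neg (by omega), if_neg (by omega), if_neg (by omega), if_neg (by omega)]
    simp
end

section
/- Let D be a degree-zero 1-cocycle of the Witt algebra with coefficients in 𝓕_α ⊗ 𝓕_β (so D(L_m) ∈ (𝓕_α ⊗ 𝓕_β)_m for all m). Then D(L_0) = a·δ_{α,0}·δ_{β,0} v_0 ⊗ w_0 for some a ∈ ℂ; in particular if (α,β) ≠ (0,0) then D(L_0) = 0. -/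
lemma tact_apply_s14 (α β : ℂ) (m : ℤ) (f : (ℤ × ℤ) →₀ ℂ) (q : ℤ × ℤ) :
    tact α β m f q = (-((q.1 - m : ℤ) + α * m)) * f (q.1 - m, q.2)
      + (-((q.2 - m : ℤ) + β * m)) * f (q.1, q.2 - m) := by
  rw [tact, Finsupp.lsum_apply, Finsupp.sum_apply, Finsupp.sum]
  simp only [LinearMap.toSpanSingleton_apply, smul_add, Finsupp.smul_single,
    Finsupp.coe_add, Pi.add_apply, Finsupp.single_apply, smul_eq_mul, mul_one]
  rw [Finset.sum_add_distrib]
  have h1 : ∀ p : ℤ × ℤ, ((m + p.1, p.2) = q) = (p = (q.1 - m, q.2)) := by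
    intro p; ext; simp [Prod.ext_iff]; omega
  have h2 : ∀ p : ℤ × ℤ, ((p.1, m + p.2) = q) = (p = (q.1, q.2 - m)) := by
    intro p; ext; simp [Prod.ext_iff]; omega
  simp only [h1, h2, Finset.sum_ite_eq' f.support]
  by_cases hA : (q.1 - m, q.2) ∈ f.support <;> by_cases hB : (q.1, q.2 - m) ∈ f.support <;>
    simp_all [Finsupp.notMem_support_iff] <;> ring

/-- a degree-zero 1-cocycle `D` of the Witt algebra with
coefficients in `𝓕_α ⊗ 𝓕_β` satisfies
`D(L_0) = a · δ_{α,0} · δ_{β,0} v_0 ⊗ w_0` for some `a ∈ ℂ`. -/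
theorem degree_zero_cocycle_value_at_L0 (α β : ℂ)
    (D : ℤ → ((ℤ × ℤ) →₀ ℂ)) (hD : IsCocycle α β D)
    (hdeg : ∀ m : ℤ, ∀ p ∈ (D m).support, p.1 + p.2 = m) :
    ∃ a : ℂ,
      D 0 = (a * (if α = 0 then 1 else 0) * (if β = 0 then 1 else 0)) •
        Finsupp.single ((0 : ℤ), (0 : ℤ)) (1 : ℂ) := by
  have hoff : ∀ m : ℤ, ∀ q : ℤ × ℤ, q.1 + q.2 ≠ m → D m q = 0 := by
    intro m q hq
    by_contra h
    exact hq (hdeg m q (Finsupp.mem_support_iff.mpr h))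
  have htact0 : ∀ m : ℤ, ∀ q : ℤ × ℤ, tact α β 0 (D m) q = -(m : ℂ) * D m q := by
    intro m q
    rw [tact_apply_s14]
    rcases q with ⟨x, y⟩
    simp only [sub_zero]
    by_cases hq : x + y = m
    · have hm : (m : ℂ) = (x : ℂ) + y := by exact_mod_cast hq.symm
      rw [hm]; ring
    · have h3 : D m (x, y) = 0 := hoff m (x, y) hq
      simp [h3]
  have hkey : ∀ m : ℤ, ∀ q : ℤ × ℤ, tact α β m (D 0) q = 0 := by
    intro m q
    have := hD m 0
    simp only [add_zero, sub_zero] at this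
    have hq := congrArg (fun f => f q) this
    simp only [Finsupp.smul_apply, Finsupp.sub_apply, smul_eq_mul] at hq
    rw [htact0 m q] at hq
    linear_combination -hq
  set c : ℤ → ℂ := fun i => D 0 (i, -i) with hc
  have hE : ∀ m x : ℤ, (-((x : ℂ) - m + α * m)) * c (x - m) + ((x : ℂ) - β * m) * c x = 0 := by
    intro m x
    have h := hkey m (x, m - x)
    rw [tact_apply_s14] at h
    have e1 : (((x, m - x) : ℤ × ℤ).1 - m, ((x, m - x) : ℤ × ℤ).2) = (x - m, -(x - m)) := by
      simp [Prod.ext_iff]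
    have e2 : (((x, m - x) : ℤ × ℤ).1, ((x, m - x) : ℤ × ℤ).2 - m) = (x, -x) := by
      simp [Prod.ext_iff]
    rw [e1, e2] at h
    simp only [hc]
    push_cast at h ⊢
    linear_combination h
  have hA : ∀ i : ℤ, i ≠ 0 → c i = 0 := by
    intro i hi
    have hfin : Set.Finite ({m : ℤ | c (i - m) ≠ 0} ∪ {m : ℤ | (i : ℂ) - β * m = 0}) := by
      apply Set.Finite.union
      · apply Set.Finite.of_finite_image (f := fun m => ((i - m, -(i - m)) : ℤ × ℤ))
        · apply Set.Finite.subset (D 0).support.finite_toSet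
          rintro p ⟨m, hm, rfl⟩
          exact Finsupp.mem_support_iff.mpr hm
        · intro a _ b _ h
          simp only [Prod.mk.injEq] at h
          omega
      · by_cases hb : β = 0
        · have : {m : ℤ | (i : ℂ) - β * m = 0} = ∅ := by
            ext m
            simp [hb, sub_eq_zero, Int.cast_eq_zero]
            exact hi
          rw [this]; exact Set.finite_empty
        · apply Set.Subsingleton.finite
          intro a ha b hb'
          simp only [Set.mem_setOf_eq, sub_eq_zero] at ha hb'
          have : (a : ℂ) = b := mul_left_cancel₀ hb (ha.symm.trans hb')
          exact_mod_cast this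
    obtain ⟨m, hm⟩ := hfin.infinite_compl.nonempty
    simp only [Set.mem_compl_iff, Set.mem_union, not_or, Set.mem_setOf_eq, not_not] at hm
    have h := hE m i
    rw [hm.1, mul_zero, zero_add] at h
    exact (mul_eq_zero.mp h).resolve_left hm.2
  have hB : α ≠ 0 ∨ β ≠ 0 → c 0 = 0 := by
    rintro (ha | hb)
    · have h := hE 1 1
      rw [hA 1 one_ne_zero, mul_zero, add_zero] at h
      have h1 : c (1 - 1) = c 0 := by norm_num
      rw [h1] at h
      have : -α * c 0 = 0 := by push_cast at h; linear_combination h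
      rcases mul_eq_zero.mp this with h' | h'
      · exact absurd (neg_eq_zero.mp h') ha
      · exact h'
    · have h := hE 1 0
      rw [hA (0 - 1) (by norm_num)] at h
      simp only [mul_zero, zero_add] at h
      have : -β * c 0 = 0 := by push_cast at h; linear_combination h
      rcases mul_eq_zero.mp this with h' | h'
      · exact absurd (neg_eq_zero.mp h') hb
      · exact h'
  have hD0 : D 0 = c 0 • Finsupp.single ((0 : ℤ), (0 : ℤ)) (1 : ℂ) := by
    ext q
    rcases q with ⟨x, y⟩
    rw [Finsupp.smul_apply, Finsupp.single_apply, smul_eq_mul]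
    by_cases hxy : x + y = 0
    · have hy : y = -x := by omega
      subst hy
      by_cases hx : x = 0
      · subst hx; simp [hc]
      · rw [if_neg (by simp [Prod.ext_iff]; intro h; exact absurd h.symm hx)]
        rw [mul_zero]
        exact hA x hx
    · rw [hoff 0 (x, y) (by simpa using hxy)]
      rw [if_neg (by simp [Prod.ext_iff]; omega)]
      rw [mul_zero]
  refine ⟨c 0, ?_⟩
  by_cases ha : α = 0 <;> by_cases hb : β = 0
  · rw [hD0]; simp [ha, hb]
  · rw [hD0, hB (Or.inr hb)]; simp [ha, hb]
  · rw [hD0, hB (Or.inl ha)]; simp [ha, hb]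
  · rw [hD0, hB (Or.inl ha)]; simp [ha, hb]
end
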